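/- Statement (18) of the paper: Under the hypotheses of Theorem 2 — fixed K₀ ≥ 1 and c₀ > 0; for each T an integer n(T) ≥ K₀, a partition {G₁^{(T)},…,G_{K₀}^{(T)}} of {1,…,n(T)} into K₀ nonempty groups, a random symmetric array d̂^{(T)} with probability measure P_T, h_max(T) > 0 with (log n(T)+log T)/(T·h_max(T)) → 0; property (8): for every ε > 0 there exists C with limsup_T P_T( max_{k} max_{i,j∈G_k^{(T)}, i≠j} d̂^{(T)}_{ij} > C·√(log n(T)+log T) ) ≤ ε; property (9): min_{k<k′} min_{i∈G_k^{(T)}, j∈G_{k′}^{(T)}} d̂^{(T)}_{ij} ≥ c₀·√(T·h_max(T)) + R_T with R_T/√(T·h_max(T)) → 0 in probability; and a deterministic sequence π_T with π_T/√(log n(T)+log T) → ∞ and π_T/√(T·h_max(T)) → 0 — it holds that P_T( max_{C ∈ P^{n(T)−K₀}(d̂^{(T)})} Δ(C) ≤ π_T ) → 1 as T → ∞, where P^{n−K₀}(d) is the complete-linkage HAC partition into K₀ clusters computed from d. -/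

import Mathlib

open Finset

/-- Complete-linkage dissimilarity `Δ(S,S') = max_{i ∈ S, j ∈ S'} d i j`, as an
extended real (so that the value over an empty index set is `⊥`). -/
noncomputable def cLink {n : ℕ} (d : Fin n → Fin n → ℝ) (S S' : Finset (Fin n)) : EReal :=
  sSup {x : EReal | ∃ i ∈ S, ∃ j ∈ S', x = (d i j : EReal)}

/-- Within-cluster dissimilarity `Δ(C) = max_{i,j ∈ C, i ≠ j} d i j`, as an extended real;
for a singleton (or empty) cluster the value is `⊥`, which is smaller than every real. -/
noncomputable def cDiam {n : ℕ} (d : Fin n → Fin n → ℝ) (C : Finset (Fin n)) : EReal :=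
  sSup {x : EReal | ∃ i ∈ C, ∃ j ∈ C, i ≠ j ∧ x = (d i j : EReal)}

/-- The initial partition of `{1,…,n}` into `n` singleton clusters. -/
def singletonPartition (n : ℕ) : Finset (Finset (Fin n)) :=
  Finset.univ.image fun i : Fin n => ({i} : Finset (Fin n))

/-- `Q` is obtained from `P` by merging one pair of distinct clusters attaining the
minimum of the complete-linkage dissimilarity `Δ` over all pairs of distinct clusters. -/
def IsMergeStep {n : ℕ} (d : Fin n → Fin n → ℝ) (P Q : Finset (Finset (Fin n))) : Prop :=
  ∃ C ∈ P, ∃ C' ∈ P, C ≠ C' ∧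
    (∀ D ∈ P, ∀ D' ∈ P, D ≠ D' → cLink d C C' ≤ cLink d D D') ∧
    Q = insert (C ∪ C') ((P.erase C).erase C')

/-- A run of the complete-linkage HAC algorithm (with an arbitrary choice of
tie-breaking at each step): `P 0` is the singleton partition and for every
`r < n - 1`, `P (r+1)` is obtained from `P r` by a merge step. -/
def IsHACChain {n : ℕ} (d : Fin n → Fin n → ℝ) (P : ℕ → Finset (Finset (Fin n))) : Prop :=
  P 0 = singletonPartition n ∧ ∀ r, r < n - 1 → IsMergeStep d (P r) (P (r + 1))

/-- `G` is a partition of `{1,…,n}` into `K₀` nonempty groups. -/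
def IsGroupPartition {n K₀ : ℕ} (G : Fin K₀ → Finset (Fin n)) : Prop :=
  (∀ k, (G k).Nonempty) ∧ (∀ i : Fin n, ∃ k, i ∈ G k) ∧
    ∀ k k' : Fin K₀, k ≠ k' → Disjoint (G k) (G k')

/-- The partition `G` is `d`-separated: every within-group distance is strictly smaller
than every between-group distance (vacuously true when `K₀ = 1`). -/
def IsSeparated {n K₀ : ℕ} (d : Fin n → Fin n → ℝ) (G : Fin K₀ → Finset (Fin n)) : Prop :=
  ∀ k : Fin K₀, ∀ i ∈ G k, ∀ j ∈ G k, i ≠ j →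
    ∀ k₁ k₂ : Fin K₀, k₁ ≠ k₂ → ∀ a ∈ G k₁, ∀ b ∈ G k₂, d i j < d a b

/-- `A` is a refinement of `B`: every element of `A` is a subset of some element of `B`. -/
def IsRefinement {n : ℕ} (A B : Finset (Finset (Fin n))) : Prop :=
  ∀ C ∈ A, ∃ D ∈ B, C ⊆ D

/-- The thresholded dendrogram estimator of the number of groups:
`K̂₀(d,π) = min { K ∈ {1,…,n} : every cluster of the HAC partition into K clusters has
within-cluster dissimilarity at most π }`. -/
noncomputable def Khat {n : ℕ} (d : Fin n → Fin n → ℝ)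
    (P : ℕ → Finset (Finset (Fin n))) (π : ℝ) : ℕ :=
  sInf {K : ℕ | 1 ≤ K ∧ K ≤ n ∧ ∀ C ∈ P (n - K), cDiam d C ≤ (π : EReal)}

/-- Maximal within-group distance `max_{k} max_{i,j ∈ G k, i ≠ j} d i j` (real-valued
supremum; by Mathlib's convention it is `0` if there is no within-group pair). -/
noncomputable def withinMax {n K₀ : ℕ} (d : Fin n → Fin n → ℝ)
    (G : Fin K₀ → Finset (Fin n)) : ℝ :=
  sSup {x : ℝ | ∃ k, ∃ i ∈ G k, ∃ j ∈ G k, i ≠ j ∧ x = d i j}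

/-- Minimal between-group distance `min_{k < k'} min_{i ∈ G k, j ∈ G k'} d i j`
(real-valued infimum). -/
noncomputable def betweenMin {n K₀ : ℕ} (d : Fin n → Fin n → ℝ)
    (G : Fin K₀ → Finset (Fin n)) : ℝ :=
  sInf {x : ℝ | ∃ k k' : Fin K₀, k ≠ k' ∧ ∃ i ∈ G k, ∃ j ∈ G k', x = d i j}

open MeasureTheory Filter
section Aux
variable {n K₀ : ℕ} (d : Fin n → Fin n → ℝ) (G : Fin K₀ → Finset (Fin n))

lemma withinSet_finite :
    {x : ℝ | ∃ k, ∃ i ∈ G k, ∃ j ∈ G k, i ≠ j ∧ x = d i j}.Finite := by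
  apply Set.Finite.subset (Set.finite_range fun p : Fin n × Fin n => d p.1 p.2)
  rintro x ⟨k, i, _, j, _, _, rfl⟩; exact ⟨(i, j), rfl⟩

lemma le_withinMax {k : Fin K₀} {i j : Fin n} (hi : i ∈ G k) (hj : j ∈ G k) (hij : i ≠ j) :
    d i j ≤ withinMax d G :=
  le_csSup (withinSet_finite d G).bddAbove ⟨k, i, hi, j, hj, hij, rfl⟩

lemma betweenSet_finite :
    {x : ℝ | ∃ k k' : Fin K₀, k ≠ k' ∧ ∃ i ∈ G k, ∃ j ∈ G k', x = d i j}.Finite := by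
  apply Set.Finite.subset (Set.finite_range fun p : Fin n × Fin n => d p.1 p.2)
  rintro x ⟨k, k', _, i, _, j, _, rfl⟩; exact ⟨(i, j), rfl⟩

lemma betweenMin_le {k k' : Fin K₀} {a b : Fin n} (hkk : k ≠ k') (ha : a ∈ G k)
    (hb : b ∈ G k') : betweenMin d G ≤ d a b :=
  csInf_le (betweenSet_finite d G).bddBelow ⟨k, k', hkk, a, ha, b, hb, rfl⟩

lemma isSeparated_of_lt (h : withinMax d G < betweenMin d G) : IsSeparated d G :=
  fun _ i hi j hj hij k₁ k₂ hk a ha b hb =>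
    lt_of_le_of_lt (le_withinMax d G hi hj hij)
      (lt_of_lt_of_le h (betweenMin_le d G hk ha hb))

lemma isSeparated_of_one (hK : K₀ = 1) : IsSeparated d G := by
  subst hK
  intro k i _ j _ _ k₁ k₂ hk
  exact absurd (Subsingleton.elim k₁ k₂) hk

lemma cLinkSet_finite (S S' : Finset (Fin n)) :
    {x : EReal | ∃ i ∈ S, ∃ j ∈ S', x = (d i j : EReal)}.Finite := by
  apply Set.Finite.subset (Set.finite_range fun p : Fin n × Fin n => ((d p.1 p.2 : ℝ) : EReal))
  rintro x ⟨i, _, j, _, rfl⟩; exact ⟨(i, j), rfl⟩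

lemma le_cLink {S S' : Finset (Fin n)} {i j : Fin n} (hi : i ∈ S) (hj : j ∈ S') :
    (d i j : EReal) ≤ cLink d S S' :=
  le_sSup ⟨i, hi, j, hj, rfl⟩

lemma cLink_mem {S S' : Finset (Fin n)} (hS : S.Nonempty) (hS' : S'.Nonempty) :
    cLink d S S' ∈ {x : EReal | ∃ i ∈ S, ∃ j ∈ S', x = (d i j : EReal)} := by
  obtain ⟨i, hi⟩ := hS; obtain ⟨j, hj⟩ := hS'
  exact Set.Nonempty.csSup_mem ⟨_, i, hi, j, hj, rfl⟩ (cLinkSet_finite d S S')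

lemma cDiam_le_of_subset {C : Finset (Fin n)} {k : Fin K₀} (hC : C ⊆ G k) {p : ℝ}
    (hp : withinMax d G ≤ p) : cDiam d C ≤ (p : EReal) := by
  apply sSup_le
  rintro x ⟨i, hi, j, hj, hij, rfl⟩
  exact_mod_cast le_trans (le_withinMax d G (hC hi) (hC hj) hij) hp

/-- Invariant of the HAC run under separation. -/
def HACInv (P : Finset (Finset (Fin n))) (r : ℕ) : Prop :=
  P.card + r = n ∧ (∀ C ∈ P, C.Nonempty) ∧
    (∀ C ∈ P, ∀ C' ∈ P, C ≠ C' → Disjoint C C') ∧ (∀ C ∈ P, ∃ k, C ⊆ G k)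

lemma hacinv_zero (hG : IsGroupPartition G) : HACInv G (singletonPartition n) 0 := by
  refine ⟨?_, ?_, ?_, ?_⟩
  · rw [singletonPartition, Finset.card_image_of_injective _ (fun a b h => by
      simpa using h)]
    simp
  · intro C hC
    simp only [singletonPartition, mem_image] at hC
    obtain ⟨i, _, rfl⟩ := hC; exact ⟨i, by simp⟩
  · intro C hC C' hC' hne
    simp only [singletonPartition, mem_image] at hC hC'
    obtain ⟨i, _, rfl⟩ := hC; obtain ⟨j, _, rfl⟩ := hC'
    simp only [Finset.disjoint_singleton] ; intro h; exact hne (by rw [h])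
  · intro C hC
    simp only [singletonPartition, mem_image] at hC
    obtain ⟨i, _, rfl⟩ := hC
    obtain ⟨k, hk⟩ := hG.2.1 i
    exact ⟨k, by simpa using hk⟩

lemma hacinv_step (hK : 1 ≤ K₀) (hsep : IsSeparated d G) {P Q : Finset (Finset (Fin n))} {r : ℕ}
    (hInv : HACInv G P r) (hcard : K₀ < P.card) (hstep : IsMergeStep d P Q) :
    HACInv G Q (r + 1) := by
  obtain ⟨hcardP, hne, hdisj, hsub⟩ := hInv
  obtain ⟨C, hC, C', hC', hCC', hmin, rfl⟩ := hstep
  -- pigeonhole: two distinct clusters within the same group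
  have hpigeon : ∃ D ∈ P, ∃ D' ∈ P, D ≠ D' ∧ ∃ k, D ⊆ G k ∧ D' ⊆ G k := by
    set f : Finset (Fin n) → Fin K₀ := fun S =>
      if h : ∃ k, S ⊆ G k then h.choose else ⟨0, hK⟩ with hf
    obtain ⟨D, hD, D', hD', hne', hfeq⟩ :=
      Finset.exists_ne_map_eq_of_card_lt_of_maps_to
        (t := (Finset.univ : Finset (Fin K₀)))
        (by simpa using hcard) (fun S _ => Finset.mem_univ (f S))
    have h1 : ∃ k, D ⊆ G k := hsub D hD
    have h2 : ∃ k, D' ⊆ G k := hsub D' hD'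
    refine ⟨D, hD, D', hD', hne', f D, ?_, ?_⟩
    · rw [hf]; simp only [dif_pos h1]; exact h1.choose_spec
    · rw [hfeq, hf]; simp only [dif_pos h2]; exact h2.choose_spec
  obtain ⟨D, hD, D', hD', hDD', k, hDk, hD'k⟩ := hpigeon
  obtain ⟨k₁, hk₁⟩ := hsub C hC
  obtain ⟨k₂, hk₂⟩ := hsub C' hC'
  -- merged clusters lie in the same group
  have hsame : k₁ = k₂ := by
    by_contra hkk
    obtain ⟨a, ha⟩ := hne C hC
    obtain ⟨b, hb⟩ := hne C' hC'
    obtain ⟨i₀, hi₀, j₀, hj₀, hlink⟩ := cLink_mem d (hne D hD) (hne D' hD')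
    have hij : i₀ ≠ j₀ := fun h =>
      (Finset.disjoint_left.1 (hdisj D hD D' hD' hDD')) hi₀ (h ▸ hj₀)
    have hlt : d i₀ j₀ < d a b :=
      hsep k i₀ (hDk hi₀) j₀ (hD'k hj₀) hij k₁ k₂ hkk a (hk₁ ha) b (hk₂ hb)
    have h1 : (d a b : EReal) ≤ cLink d C C' := le_cLink d ha hb
    have h2 : cLink d C C' ≤ cLink d D D' := hmin D hD D' hD' hDD'
    rw [hlink] at h2
    exact absurd (lt_of_le_of_lt (h1.trans h2) (by exact_mod_cast hlt)) (lt_irrefl _)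
  subst hsame
  have hunion : C ∪ C' ⊆ G k₁ := Finset.union_subset hk₁ hk₂
  have hC'E : C' ∈ P.erase C := Finset.mem_erase.2 ⟨hCC'.symm, hC'⟩
  have hmemE : ∀ {X}, X ∈ (P.erase C).erase C' → X ∈ P ∧ X ≠ C ∧ X ≠ C' := by
    intro X hX
    have h1 := Finset.mem_of_mem_erase hX
    exact ⟨Finset.mem_of_mem_erase h1, Finset.ne_of_mem_erase h1, Finset.ne_of_mem_erase hX⟩
  have hnotin : C ∪ C' ∉ (P.erase C).erase C' := by
    intro h
    obtain ⟨hP, hne1, _⟩ := hmemE h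
    have hd : Disjoint (C ∪ C') C := hdisj _ hP C hC hne1
    obtain ⟨a, ha⟩ := hne C hC
    exact (Finset.disjoint_left.1 hd) (Finset.mem_union_left _ ha) ha
  refine ⟨?_, ?_, ?_, ?_⟩
  · rw [Finset.card_insert_of_notMem hnotin, Finset.card_erase_of_mem hC'E,
      Finset.card_erase_of_mem hC]
    omega
  · intro X hX
    rcases Finset.mem_insert.1 hX with rfl | hX
    · exact (hne C hC).mono Finset.subset_union_left
    · exact hne X (hmemE hX).1
  · intro X hX Y hY hXY
    rcases Finset.mem_insert.1 hX with rfl | hX <;>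
      rcases Finset.mem_insert.1 hY with rfl | hY
    · exact absurd rfl hXY
    · obtain ⟨hYP, hY1, hY2⟩ := hmemE hY
      exact Finset.disjoint_union_left.2
        ⟨hdisj C hC Y hYP (Ne.symm hY1), hdisj C' hC' Y hYP (Ne.symm hY2)⟩
    · obtain ⟨hXP, hX1, hX2⟩ := hmemE hX
      exact (Finset.disjoint_union_left.2
        ⟨hdisj C hC X hXP (Ne.symm hX1), hdisj C' hC' X hXP (Ne.symm hX2)⟩).symm
    · exact hdisj X (hmemE hX).1 Y (hmemE hY).1 hXY
  · intro X hX
    rcases Finset.mem_insert.1 hX with rfl | hX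
    · exact ⟨k₁, hunion⟩
    · exact hsub X (hmemE hX).1

lemma hac_inv (hK : 1 ≤ K₀) (hG : IsGroupPartition G) (hsep : IsSeparated d G)
    (hn : K₀ ≤ n) {Q : ℕ → Finset (Finset (Fin n))} (hQ : IsHACChain d Q) :
    ∀ r, r ≤ n - K₀ → HACInv G (Q r) r := by
  intro r
  induction r with
  | zero => intro _; rw [hQ.1]; exact hacinv_zero G hG
  | succ r ih =>
    intro hr
    have hprev := ih (by omega)
    have hcard : K₀ < (Q r).card := by
      have := hprev.1; omega
    exact hacinv_step d G hK hsep hprev hcard (hQ.2 r (by omega))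

/-- The key deterministic lemma. -/
lemma deterministic_main (hK : 1 ≤ K₀) (hG : IsGroupPartition G) (hsep : IsSeparated d G)
    (hn : K₀ ≤ n) {Q : ℕ → Finset (Finset (Fin n))} (hQ : IsHACChain d Q)
    {p : ℝ} (hp : withinMax d G ≤ p) :
    ∀ C ∈ Q (n - K₀), cDiam d C ≤ (p : EReal) := by
  intro C hC
  obtain ⟨k, hk⟩ := (hac_inv d G hK hG hsep hn hQ (n - K₀) le_rfl).2.2.2 C hC
  exact cDiam_le_of_subset d G hk hp

end Aux
/-- **Statement (18) of the paper.** Under the hypotheses of Theorem 2, the probability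
that every cluster of the HAC partition into `K₀` clusters has within-cluster
dissimilarity at most `π_T` tends to `1`. -/
theorem statement18_of_paper {K₀ : ℕ} (hK₀ : 1 ≤ K₀) (c₀ : ℝ) (hc₀ : 0 < c₀)
    (n : ℕ → ℕ) (hn : ∀ T, K₀ ≤ n T)
    (Ω : ℕ → Type*) [∀ T, MeasurableSpace (Ω T)]
    (μ : ∀ T, Measure (Ω T)) [∀ T, IsProbabilityMeasure (μ T)]
    (dh : ∀ T, Ω T → Fin (n T) → Fin (n T) → ℝ)
    (hsym : ∀ T ω i j, dh T ω i j = dh T ω j i)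
    (G : ∀ T, Fin K₀ → Finset (Fin (n T)))
    (hG : ∀ T, IsGroupPartition (G T))
    (hmax : ℕ → ℝ) (hhmax : ∀ T, 0 < hmax T)
    (hratio : Tendsto
      (fun T : ℕ => (Real.log (n T) + Real.log (T : ℝ)) / ((T : ℝ) * hmax T))
      atTop (nhds 0))
    -- property (8): the within-group maximum is O_p(√(log n + log T))
    (h8 : ∀ ε : ℝ, 0 < ε → ∃ C : ℝ,
      Filter.limsup
        (fun T => μ T {ω |
          C * Real.sqrt (Real.log (n T) + Real.log (T : ℝ)) < withinMax (dh T ω) (G T)})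
        atTop ≤ ENNReal.ofReal ε)
    -- property (9): the between-group minimum is ≥ c₀·√(T·h_max) + o_p(√(T·h_max))
    (h9 : 1 < K₀ → ∃ R : ∀ T, Ω T → ℝ,
      (∀ (T : ℕ) (ω : Ω T), c₀ * Real.sqrt ((T : ℝ) * hmax T) + R T ω ≤ betweenMin (dh T ω) (G T)) ∧
        ∀ ε : ℝ, 0 < ε →
          Tendsto (fun T => μ T {ω | ε * Real.sqrt ((T : ℝ) * hmax T) < |R T ω|})
            atTop (nhds 0))
    -- property (10): √(log n + log T) ≪ π_T ≪ √(T·h_max)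
    (π : ℕ → ℝ)
    (hπ1 : Tendsto
      (fun T => π T / Real.sqrt (Real.log (n T) + Real.log (T : ℝ))) atTop atTop)
    (hπ2 : Tendsto
      (fun T => π T / Real.sqrt ((T : ℝ) * hmax T)) atTop (nhds 0)) :
    Tendsto
      (fun T => μ T {ω | ∀ Q, IsHACChain (dh T ω) Q →
        ∀ C ∈ Q (n T - K₀), cDiam (dh T ω) C ≤ ((π T : ℝ) : EReal)})
      atTop (nhds (1 : ENNReal)) := by
  -- abbreviate the "good" event
  set Sev : ∀ T : ℕ, Set (Ω T) := fun T => {ω | ∀ Q, IsHACChain (dh T ω) Q →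
        ∀ C ∈ Q (n T - K₀), cDiam (dh T ω) C ≤ ((π T : ℝ) : EReal)} with hSdef
  -- eventual positivity facts
  have hL0 : ∀ᶠ T : ℕ in atTop, 0 ≤ Real.log (n T) + Real.log (T : ℝ) := by
    filter_upwards [eventually_ge_atTop 1] with T hT
    have h1 : (1 : ℝ) ≤ (n T : ℝ) := by exact_mod_cast hK₀.trans (hn T)
    have h2 : (1 : ℝ) ≤ (T : ℝ) := by exact_mod_cast hT
    have := Real.log_nonneg h1
    have := Real.log_nonneg h2
    linarith
  have hMpos : ∀ᶠ T : ℕ in atTop, 0 < Real.sqrt ((T : ℝ) * hmax T) := by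
    filter_upwards [eventually_ge_atTop 1] with T hT
    have h2 : (0 : ℝ) < (T : ℝ) := by exact_mod_cast hT
    exact Real.sqrt_pos.2 (mul_pos h2 (hhmax T))
  -- main estimate on the complement
  have key : ∀ ε : ℝ, 0 < ε →
      limsup (fun T => μ T (Sev T)ᶜ) atTop ≤ ENNReal.ofReal ε + ENNReal.ofReal ε := by
    intro ε hε
    obtain ⟨C, hC8⟩ := h8 ε hε
    -- eventually C·√L ≤ π T
    have hCπ : ∀ᶠ T : ℕ in atTop,
        C * Real.sqrt (Real.log (n T) + Real.log (T : ℝ)) ≤ π T := by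
      filter_upwards [hπ1.eventually_ge_atTop (max C 1)] with T hT
      set s := Real.sqrt (Real.log (n T) + Real.log (T : ℝ)) with hs
      have hspos : 0 < s := by
        rcases lt_or_ge 0 s with h | h
        · exact h
        · exfalso
          have hs0 : s = 0 := le_antisymm h (Real.sqrt_nonneg _)
          rw [hs0, div_zero] at hT
          have : (1 : ℝ) ≤ 0 := le_trans (le_max_right C 1) hT
          linarith
      have : C ≤ π T / s := le_trans (le_max_left C 1) hT
      exact (le_div_iff₀ hspos).1 this
    rcases eq_or_lt_of_le hK₀ with hK1 | hK1
    · -- K₀ = 1 : separation is vacuous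
      have hsub : ∀ᶠ T : ℕ in atTop, μ T (Sev T)ᶜ ≤
          μ T {ω | C * Real.sqrt (Real.log (n T) + Real.log (T : ℝ)) <
            withinMax (dh T ω) (G T)} := by
        filter_upwards [hCπ] with T hT
        apply measure_mono
        intro ω hω
        rw [Set.mem_compl_iff] at hω
        by_contra h
        rw [Set.mem_setOf_eq, not_lt] at h
        exact hω (fun Q hQ =>
          deterministic_main (dh T ω) (G T) hK₀ (hG T)
            (isSeparated_of_one (dh T ω) (G T) hK1.symm) (hn T) hQ (h.trans hT))
      calc limsup (fun T => μ T (Sev T)ᶜ) atTop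
          ≤ limsup (fun T => μ T {ω |
              C * Real.sqrt (Real.log (n T) + Real.log (T : ℝ)) <
                withinMax (dh T ω) (G T)}) atTop := limsup_le_limsup hsub
        _ ≤ ENNReal.ofReal ε := hC8
        _ ≤ ENNReal.ofReal ε + ENNReal.ofReal ε := le_self_add
    · -- K₀ > 1
      obtain ⟨R, hR1, hR2⟩ := h9 hK1
      have htendB := hR2 (c₀ / 2) (by positivity)
      -- eventually C·√L < (c₀/2)·√(T·hmax)
      have hsq : Tendsto (fun T : ℕ =>
          Real.sqrt ((Real.log (n T) + Real.log (T : ℝ)) / ((T : ℝ) * hmax T)))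
          atTop (nhds 0) := by
        simpa using hratio.sqrt
      have heq : (fun T : ℕ => Real.sqrt (Real.log (n T) + Real.log (T : ℝ)) /
            Real.sqrt ((T : ℝ) * hmax T)) =ᶠ[atTop]
          fun T : ℕ => Real.sqrt ((Real.log (n T) + Real.log (T : ℝ)) /
            ((T : ℝ) * hmax T)) := by
        filter_upwards [hL0] with T hT
        rw [Real.sqrt_div hT]
      have hdivtend : Tendsto (fun T : ℕ =>
          C * (Real.sqrt (Real.log (n T) + Real.log (T : ℝ)) /
            Real.sqrt ((T : ℝ) * hmax T))) atTop (nhds 0) := by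
        simpa using ((hsq.congr' heq.symm).const_mul C)
      have hev2 : ∀ᶠ T : ℕ in atTop,
          C * Real.sqrt (Real.log (n T) + Real.log (T : ℝ)) <
            (c₀ / 2) * Real.sqrt ((T : ℝ) * hmax T) := by
        filter_upwards [hdivtend.eventually_lt_const (show (0:ℝ) < c₀ / 2 by positivity),
          hMpos] with T h1 h2
        have hMne : Real.sqrt ((T : ℝ) * hmax T) ≠ 0 := ne_of_gt h2
        have hrw : C * Real.sqrt (Real.log (n T) + Real.log (T : ℝ)) =
            (C * (Real.sqrt (Real.log (n T) + Real.log (T : ℝ)) /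
              Real.sqrt ((T : ℝ) * hmax T))) * Real.sqrt ((T : ℝ) * hmax T) := by
          rw [mul_assoc, div_mul_cancel₀ _ hMne]
        rw [hrw]
        exact mul_lt_mul_of_pos_right h1 h2
      have hBev : ∀ᶠ T : ℕ in atTop,
          μ T {ω | (c₀ / 2) * Real.sqrt ((T : ℝ) * hmax T) < |R T ω|} ≤ ENNReal.ofReal ε :=
        (htendB.eventually_lt_const (ENNReal.ofReal_pos.2 hε)).mono fun T h => h.le
      -- eventual inclusion into the union of two bad events
      have hsub : ∀ᶠ T : ℕ in atTop, μ T (Sev T)ᶜ ≤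
          μ T {ω | C * Real.sqrt (Real.log (n T) + Real.log (T : ℝ)) <
              withinMax (dh T ω) (G T)} + ENNReal.ofReal ε := by
        filter_upwards [hCπ, hev2, hBev] with T h1 h2 h3
        refine le_trans (le_trans (measure_mono ?_) (measure_union_le _ _))
          (add_le_add le_rfl h3)
        intro ω hω
        rw [Set.mem_compl_iff] at hω
        by_contra h
        rw [Set.mem_union, not_or] at h
        obtain ⟨hA, hB⟩ := h
        rw [Set.mem_setOf_eq, not_lt] at hA hB
        apply hω
        intro Q hQ
        have hsep : IsSeparated (dh T ω) (G T) := by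
          apply isSeparated_of_lt
          have h9' := hR1 T ω
          have habs : -((c₀ / 2) * Real.sqrt ((T : ℝ) * hmax T)) ≤ R T ω :=
            le_trans (neg_le_neg hB) (neg_abs_le _)
          linarith
        exact deterministic_main (dh T ω) (G T) hK₀ (hG T) hsep (hn T) hQ (hA.trans h1)
      have hbdd : IsBoundedUnder (· ≤ ·) (atTop : Filter ℕ)
          (fun T => μ T {ω | C * Real.sqrt (Real.log (n T) + Real.log (T : ℝ)) <
              withinMax (dh T ω) (G T)}) :=
        ⟨⊤, eventually_map.2 (Eventually.of_forall fun _ => le_top)⟩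
      have hcobdd : IsCoboundedUnder (· ≤ ·) (atTop : Filter ℕ)
          (fun T => μ T {ω | C * Real.sqrt (Real.log (n T) + Real.log (T : ℝ)) <
              withinMax (dh T ω) (G T)}) :=
        ⟨0, fun a _ => zero_le⟩
      calc limsup (fun T => μ T (Sev T)ᶜ) atTop
          ≤ limsup (fun T => μ T {ω |
              C * Real.sqrt (Real.log (n T) + Real.log (T : ℝ)) <
                withinMax (dh T ω) (G T)} + ENNReal.ofReal ε) atTop :=
            limsup_le_limsup hsub
        _ = limsup (fun T => μ T {ω |
              C * Real.sqrt (Real.log (n T) + Real.log (T : ℝ)) <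
                withinMax (dh T ω) (G T)}) atTop + ENNReal.ofReal ε :=
            limsup_add_const atTop _ _ hbdd hcobdd
        _ ≤ ENNReal.ofReal ε + ENNReal.ofReal ε := add_le_add hC8 le_rfl
  -- from the limsup bound, the complement tends to 0
  have hlimsup0 : limsup (fun T => μ T (Sev T)ᶜ) atTop = 0 := by
    refine le_antisymm ?_ zero_le
    refine ENNReal.le_of_forall_pos_le_add fun ε hε _ => ?_
    have hε' : (0 : ℝ) < (ε : ℝ) / 2 := by positivity
    have h := key ((ε : ℝ) / 2) hε'
    have : ENNReal.ofReal ((ε : ℝ) / 2) + ENNReal.ofReal ((ε : ℝ) / 2) =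
        ENNReal.ofReal (ε : ℝ) := by
      rw [← ENNReal.ofReal_add (by positivity) (by positivity)]
      ring_nf
    rw [this] at h
    rw [zero_add, ← ENNReal.ofReal_coe_nnreal]
    exact h
  have htend0 : Tendsto (fun T => μ T (Sev T)ᶜ) atTop (nhds 0) := by
    have hliminf : liminf (fun T => μ T (Sev T)ᶜ) atTop = 0 :=
      le_antisymm (hlimsup0 ▸ liminf_le_limsup) zero_le
    exact tendsto_of_liminf_eq_limsup hliminf hlimsup0
  -- squeeze
  refine tendsto_of_tendsto_of_tendsto_of_le_of_le
    (g := fun T => 1 - μ T (Sev T)ᶜ) (h := fun _ => (1 : ENNReal)) ?_ tendsto_const_nhds ?_ ?_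
  · have := ENNReal.Tendsto.sub (tendsto_const_nhds (x := (1 : ENNReal)) (f := atTop))
      htend0 (Or.inl ENNReal.one_ne_top)
    simpa using this
  · intro T
    rw [tsub_le_iff_right]
    calc (1 : ENNReal) = μ T Set.univ := (measure_univ).symm
      _ = μ T (Sev T ∪ (Sev T)ᶜ) := by rw [Set.union_compl_self]
      _ ≤ μ T (Sev T) + μ T (Sev T)ᶜ := measure_union_le _ _
  · intro T
    exact prob_le_one
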